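/- Let K_e = {(x¹,x²,x³) ∈ ℝ³ : (x³)² = (x¹)²/a² + (x²)²/b², x³ > 0} with a > b > 0. Let p ∈ K_e, let n be a unit normal vector to K_e at p, let v be a unit vector, and let v' = v − 2⟨v,n⟩n be its billiard reflection at p. Then I₂(p, v') = I₂(p, v), where I₂(x, v) = a²(x²v³ − x³v²)² + b²(x¹v³ − x³v¹)² − (x¹v² − x²v¹)². Consequently, since I₂(x, v) is also constant in x along any line with direction v, I₂ is a first integral of the Birkhoff billiard inside K_e. -/

import Mathlib

open Real
open scoped RealInnerProductSpace

noncomputable section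

/-- The elliptic cone `(x³)² = (x¹)²/a² + (x²)²/b²`, `x³ > 0`. -/
def Ke (a b : ℝ) : Set (EuclideanSpace ℝ (Fin 3)) :=
  {x | (x 2) ^ 2 = (x 0) ^ 2 / a ^ 2 + (x 1) ^ 2 / b ^ 2 ∧ 0 < x 2}

/-- The tangent plane to the cone `Ke a b` at a point `p`: the vectors orthogonal to the
gradient of the defining function (equivalently, spanned by the partial derivatives of the
parameterization `r(u¹,u²) = (au¹, bu², √((u¹)²+(u²)²))`). -/
def tangentKe (a b : ℝ) (p : EuclideanSpace ℝ (Fin 3)) : Set (EuclideanSpace ℝ (Fin 3)) :=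
  {u | u 0 * p 0 / a ^ 2 + u 1 * p 1 / b ^ 2 - u 2 * p 2 = 0}

def m12 (x v : EuclideanSpace ℝ (Fin 3)) : ℝ := x 0 * v 1 - x 1 * v 0
def m13 (x v : EuclideanSpace ℝ (Fin 3)) : ℝ := x 0 * v 2 - x 2 * v 0
def m23 (x v : EuclideanSpace ℝ (Fin 3)) : ℝ := x 1 * v 2 - x 2 * v 1

def I2 (a b : ℝ) (x v : EuclideanSpace ℝ (Fin 3)) : ℝ :=
  a ^ 2 * m23 x v ^ 2 + b ^ 2 * m13 x v ^ 2 - m12 x v ^ 2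

set_option maxHeartbeats 4000000 in
/-- The billiard reflection at a point of the elliptic cone preserves `I₂`; moreover `I₂` is
constant in `x` along any line, so `I₂` is a first integral of the billiard inside `K_e`. -/
theorem stmt_2 (a b : ℝ) (hab : b < a) (hb : 0 < b)
    (p n v v' : EuclideanSpace ℝ (Fin 3)) (hp : p ∈ Ke a b)
    (hn1 : ‖n‖ = 1) (hn2 : ∀ u ∈ tangentKe a b p, ⟪n, u⟫ = 0)
    (hv : ‖v‖ = 1) (hv' : v' = v - (2 * ⟪v, n⟫) • n) :
    I2 a b p v' = I2 a b p v ∧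
      ∀ (x w : EuclideanSpace ℝ (Fin 3)) (t : ℝ), I2 a b (x + t • w) w = I2 a b x w := by
  constructor
  · -- reflection invariance
    have ha : (0:ℝ) < a := hb.trans hab
    have ha0 : a ≠ 0 := ne_of_gt ha
    have hb0 : b ≠ 0 := ne_of_gt hb
    obtain ⟨hcone0, hp2pos⟩ := hp
    have hp20 : p 2 ≠ 0 := ne_of_gt hp2pos
    -- cleared cone equation
    have hcone : a^2 * b^2 * (p 2)^2 = b^2 * (p 0)^2 + a^2 * (p 1)^2 := by
      field_simp at hcone0
      linear_combination hcone0
    -- tangent vectors and resulting linear relations on n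
    have hE1 : n 0 * (a^2 * p 2) + n 2 * p 0 = 0 := by
      have hu : (!₂[a^2 * p 2, 0, p 0] : EuclideanSpace ℝ (Fin 3)) ∈ tangentKe a b p := by
        show (a^2 * p 2) * p 0 / a^2 + (0:ℝ) * p 1 / b^2 - p 0 * p 2 = 0
        field_simp
        ring
      have := hn2 _ hu
      simp [PiLp.inner_apply, RCLike.inner_apply, conj_trivial, Fin.sum_univ_three] at this
      linear_combination this
    have hE2 : n 1 * (b^2 * p 2) + n 2 * p 1 = 0 := by
      have hu : (!₂[0, b^2 * p 2, p 1] : EuclideanSpace ℝ (Fin 3)) ∈ tangentKe a b p := by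
        show (0:ℝ) * p 0 / a^2 + (b^2 * p 2) * p 1 / b^2 - p 1 * p 2 = 0
        field_simp
        ring
      have := hn2 _ hu
      simp [PiLp.inner_apply, RCLike.inner_apply, conj_trivial, Fin.sum_univ_three] at this
      linear_combination this
    -- unit norm of n
    have hRun : n 0 ^2 + n 1 ^2 + n 2 ^2 = 1 := by
      have h2 : ⟪n, n⟫ = 1 := by rw [real_inner_self_eq_norm_mul_norm, hn1]; norm_num
      rw [PiLp.inner_apply] at h2
      simpa [PiLp.inner_apply, RCLike.inner_apply, conj_trivial, Fin.sum_univ_three, sq] using h2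
    -- the proportionality constant
    set c : ℝ := -(n 2) / (a^2 * b^2 * p 2) with hc
    have hn0 : n 0 = c * (b^2 * p 0) := by
      rw [hc]; field_simp; linear_combination hE1
    have hn1' : n 1 = c * (a^2 * p 1) := by
      rw [hc]; field_simp; linear_combination hE2
    have hn2' : n 2 = -(c * (a^2 * b^2 * p 2)) := by
      rw [hc]; field_simp
    -- cleared unit-norm relation in terms of c
    have hRu : c^2 * (b^4 * (p 0)^2 + a^4 * (p 1)^2 + a^4 * b^4 * (p 2)^2) = 1 := by
      rw [hn0, hn1', hn2'] at hRun
      linear_combination hRun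
    have hL : b^4 * (p 0)^2 + a^4 * (p 1)^2 + a^4 * b^4 * (p 2)^2 ≠ 0 := by
      intro h
      rw [h, mul_zero] at hRu
      norm_num at hRu
    have hTM : (a^2*b^2)^2 * (b^4 * (p 0)^2 + a^4 * (p 1)^2 + a^4 * b^4 * (p 2)^2)^2 ≠ 0 := by
      exact mul_ne_zero (pow_ne_zero 2 (by positivity)) (pow_ne_zero 2 hL)
    have hinner : ⟪v, n⟫ = v 0 * n 0 + v 1 * n 1 + v 2 * n 2 := by
      simp [PiLp.inner_apply, RCLike.inner_apply, conj_trivial, Fin.sum_univ_three]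
      ring
    simp only [I2, m12, m13, m23, hv', hinner, PiLp.sub_apply, PiLp.smul_apply, smul_eq_mul]
    rw [hn0, hn1', hn2']
    apply mul_left_cancel₀ hTM
    linear_combination ((-4 : ℝ) * a^4 * b^12 * (p 0)^5 * (p 1) * (v 0) * (v 1) + (4 : ℝ) * a^4 * b^14 * (p 0)^5 * (p 2) * (v 0) * (v 2) + (-4 : ℝ) * a^4 * b^16 * c^2 * (p 0)^6 * (p 1)^2 * (v 0)^2 + (4 : ℝ) * a^4 * b^18 * c^2 * (p 0)^6 * (p 2)^2 * (v 0)^2 + (-4 : ℝ) * a^6 * b^10 * (p 0)^3 * (p 1)^3 * (v 0) * (v 1) + (-4 : ℝ) * a^6 * b^10 * (p 0)^4 * (p 1)^2 * (v 1)^2 + (4 : ℝ) * a^6 * b^10 * (p 0)^4 * (p 1)^2 * (v 0)^2 + (4 : ℝ) * a^6 * b^10 * (p 0)^5 * (p 1) * (v 0) * (v 1) + (4 : ℝ) * a^6 * b^12 * (p 0)^3 * (p 1) * (p 2)^2 * (v 0) * (v 1) + (4 : ℝ) * a^6 * b^12 * (p 0)^3 * (p 1)^2 * (p 2) * (v 0)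 * (v 2) + (8 : ℝ) * a^6 * b^12 * (p 0)^4 * (p 1) * (p 2) * (v 1) * (v 2) + (-4 : ℝ) * a^6 * b^14 * (p 0)^3 * (p 2)^3 * (v 0) * (v 2) + (-4 : ℝ) * a^6 * b^14 * (p 0)^4 * (p 2)^2 * (v 2)^2 + (4 : ℝ) * a^6 * b^14 * (p 0)^4 * (p 2)^2 * (v 0)^2 + (4 : ℝ) * a^6 * b^14 * (p 0)^5 * (p 2) * (v 0) * (v 2) + (-8 : ℝ) * a^6 * b^14 * c^2 * (p 0)^5 * (p 1)^3 * (v 0) * (v 1) + (8 : ℝ) * a^6 * b^14 * c^2 * (p 0)^6 * (p 1)^2 * (v 0)^2 + (8 : ℝ) * a^6 * b^16 * c^2 * (p 0)^5 * (p 1) * (p 2)^2 * (v 0) * (v 1) + (8 : ℝ) * a^6 * b^16 * c^2 * (p 0)^5 * (p 1)^2 * (p 2) * (v 0) * (v 2) + (-8 : ℝ) * a^6 * b^18 * c^2 * (p 0)^5 * (p 2)^3 * (v 0) * (v 2) + (8 : ℝ) * a^6 * b^18 * c^2 * (p 0)^6 * (p 2)^2 * (v 0)^2 + (-4 : ℝ)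 * a^8 * b^8 * (p 0)^2 * (p 1)^4 * (v 1)^2 + (4 : ℝ) * a^8 * b^8 * (p 0)^2 * (p 1)^4 * (v 0)^2 + (8 : ℝ) * a^8 * b^8 * (p 0)^3 * (p 1)^3 * (v 0) * (v 1) + (4 : ℝ) * a^8 * b^8 * (p 0)^4 * (p 1)^2 * (v 1)^2 + (-4 : ℝ) * a^8 * b^8 * (p 0)^4 * (p 1)^2 * (v 0)^2 + (4 : ℝ) * a^8 * b^10 * (p 0)^2 * (p 1)^2 * (p 2)^2 * (v 1)^2 + (-4 : ℝ) * a^8 * b^10 * (p 0)^2 * (p 1)^2 * (p 2)^2 * (v 0)^2 + (8 : ℝ) * a^8 * b^10 * (p 0)^2 * (p 1)^3 * (p 2) * (v 1) * (v 2) + (-4 : ℝ) * a^8 * b^10 * (p 0)^3 * (p 1) * (p 2)^2 * (v 0) * (v 1) + (-4 : ℝ) * a^8 * b^10 * (p 0)^3 * (p 1)^2 * (p 2) * (v 0) * (v 2) + (-4 : ℝ) * a^8 * b^10 * (p 0)^4 * (p 1) * (p 2) * (v 1) * (v 2) + (-8 : ℝ) * a^8 * b^12 * (p 0)^2 * (p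 1) * (p 2)^3 * (v 1) * (v 2) + (-4 : ℝ) * a^8 * b^12 * (p 0)^2 * (p 1)^2 * (p 2)^2 * (v 2)^2 + (4 : ℝ) * a^8 * b^12 * (p 0)^2 * (p 1)^2 * (p 2)^2 * (v 0)^2 + (4 : ℝ) * a^8 * b^12 * (p 0)^3 * (p 1) * (p 2)^2 * (v 0) * (v 1) + (4 : ℝ) * a^8 * b^12 * (p 0)^3 * (p 1)^2 * (p 2) * (v 0) * (v 2) + (4 : ℝ) * a^8 * b^12 * (p 0)^4 * (p 1) * (p 2) * (v 1) * (v 2) + (-4 : ℝ) * a^8 * b^12 * c^2 * (p 0)^4 * (p 1)^4 * (v 1)^2 + (-4 : ℝ) * a^8 * b^12 * c^2 * (p 0)^4 * (p 1)^4 * (v 0)^2 + (16 : ℝ) * a^8 * b^12 * c^2 * (p 0)^5 * (p 1)^3 * (v 0) * (v 1) + (-4 : ℝ) * a^8 * b^12 * c^2 * (p 0)^6 * (p 1)^2 * (v 0)^2 + (4 : ℝ) * a^8 * b^14 * (p 0)^2 * (p 2)^4 * (v 2)^2 + (-4 : ℝ) * a^8 * b^14 * (p 0)^2 * (p 2)^4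 * (v 0)^2 + (-8 : ℝ) * a^8 * b^14 * (p 0)^3 * (p 2)^3 * (v 0) * (v 2) + (-4 : ℝ) * a^8 * b^14 * (p 0)^4 * (p 2)^2 * (v 2)^2 + (4 : ℝ) * a^8 * b^14 * (p 0)^4 * (p 2)^2 * (v 0)^2 + (4 : ℝ) * a^8 * b^14 * c^2 * (p 0)^4 * (p 1)^2 * (p 2)^2 * (v 1)^2 + (4 : ℝ) * a^8 * b^14 * c^2 * (p 0)^4 * (p 1)^2 * (p 2)^2 * (v 0)^2 + (8 : ℝ) * a^8 * b^14 * c^2 * (p 0)^4 * (p 1)^3 * (p 2) * (v 1) * (v 2) + (-16 : ℝ) * a^8 * b^14 * c^2 * (p 0)^5 * (p 1)^2 * (p 2) * (v 0) * (v 2) + (-8 : ℝ) * a^8 * b^16 * c^2 * (p 0)^4 * (p 1) * (p 2)^3 * (v 1) * (v 2) + (-4 : ℝ) * a^8 * b^16 * c^2 * (p 0)^4 * (p 1)^2 * (p 2)^2 * (v 2)^2 + (-4 : ℝ) * a^8 * b^16 * c^2 * (p 0)^4 * (p 1)^2 * (p 2)^2 * (v 0)^2 + (16 : ℝ) * a^8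 * b^16 * c^2 * (p 0)^5 * (p 1) * (p 2)^2 * (v 0) * (v 1) + (4 : ℝ) * a^8 * b^18 * c^2 * (p 0)^4 * (p 2)^4 * (v 2)^2 + (4 : ℝ) * a^8 * b^18 * c^2 * (p 0)^4 * (p 2)^4 * (v 0)^2 + (-16 : ℝ) * a^8 * b^18 * c^2 * (p 0)^5 * (p 2)^3 * (v 0) * (v 2) + (4 : ℝ) * a^8 * b^18 * c^2 * (p 0)^6 * (p 2)^2 * (v 0)^2 + (4 : ℝ) * a^10 * b^6 * (p 0) * (p 1)^5 * (v 0) * (v 1) + (4 : ℝ) * a^10 * b^6 * (p 0)^2 * (p 1)^4 * (v 1)^2 + (-4 : ℝ) * a^10 * b^6 * (p 0)^2 * (p 1)^4 * (v 0)^2 + (-4 : ℝ) * a^10 * b^6 * (p 0)^3 * (p 1)^3 * (v 0) * (v 1) + (-4 : ℝ) * a^10 * b^8 * (p 0) * (p 1)^3 * (p 2)^2 * (v 0) * (v 1) + (-4 : ℝ) * a^10 * b^8 * (p 0) * (p 1)^4 * (p 2) * (v 0) * (v 2) + (-4 : ℝ) * a^10 * b^8 * (p 0)^2 * (p 1)^2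 * (p 2)^2 * (v 1)^2 + (4 : ℝ) * a^10 * b^8 * (p 0)^2 * (p 1)^2 * (p 2)^2 * (v 0)^2 + (-4 : ℝ) * a^10 * b^8 * (p 0)^2 * (p 1)^3 * (p 2) * (v 1) * (v 2) + (8 : ℝ) * a^10 * b^8 * (p 0)^3 * (p 1)^2 * (p 2) * (v 0) * (v 2) + (4 : ℝ) * a^10 * b^10 * (p 0) * (p 1)^2 * (p 2)^3 * (v 0) * (v 2) + (4 : ℝ) * a^10 * b^10 * (p 0) * (p 1)^3 * (p 2)^2 * (v 0) * (v 1) + (4 : ℝ) * a^10 * b^10 * (p 0)^2 * (p 1) * (p 2)^3 * (v 1) * (v 2) + (4 : ℝ) * a^10 * b^10 * (p 0)^2 * (p 1)^3 * (p 2) * (v 1) * (v 2) + (4 : ℝ) * a^10 * b^10 * (p 0)^3 * (p 1) * (p 2)^2 * (v 0) * (v 1) + (4 : ℝ) * a^10 * b^10 * (p 0)^3 * (p 1)^2 * (p 2) * (v 0) * (v 2) + (-8 : ℝ) * a^10 * b^10 * c^2 * (p 0)^3 * (p 1)^5 * (v 0) * (v 1) + (8 : ℝ) * a^10 * b^10 *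 c^2 * (p 0)^4 * (p 1)^4 * (v 1)^2 + (8 : ℝ) * a^10 * b^10 * c^2 * (p 0)^4 * (p 1)^4 * (v 0)^2 + (-8 : ℝ) * a^10 * b^10 * c^2 * (p 0)^5 * (p 1)^3 * (v 0) * (v 1) + (-4 : ℝ) * a^10 * b^12 * (p 0) * (p 1) * (p 2)^4 * (v 0) * (v 1) + (-4 : ℝ) * a^10 * b^12 * (p 0) * (p 1)^2 * (p 2)^3 * (v 0) * (v 2) + (-4 : ℝ) * a^10 * b^12 * (p 0)^2 * (p 1) * (p 2)^3 * (v 1) * (v 2) + (-4 : ℝ) * a^10 * b^12 * (p 0)^2 * (p 1)^2 * (p 2)^2 * (v 2)^2 + (4 : ℝ) * a^10 * b^12 * (p 0)^2 * (p 1)^2 * (p 2)^2 * (v 0)^2 + (8 : ℝ) * a^10 * b^12 * (p 0)^3 * (p 1) * (p 2)^2 * (v 0) * (v 1) + (8 : ℝ) * a^10 * b^12 * c^2 * (p 0)^3 * (p 1)^3 * (p 2)^2 * (v 0) * (v 1) + (8 : ℝ) * a^10 * b^12 * c^2 * (p 0)^3 * (p 1)^4 * (p 2) * (v 0) * (v 2)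 + (4 : ℝ) * a^10 * b^12 * c^2 * (p 0)^4 * (p 1)^2 * (p 2)^2 * (v 0)^2 + (-16 : ℝ) * a^10 * b^12 * c^2 * (p 0)^4 * (p 1)^3 * (p 2) * (v 1) * (v 2) + (8 : ℝ) * a^10 * b^12 * c^2 * (p 0)^5 * (p 1)^2 * (p 2) * (v 0) * (v 2) + (4 : ℝ) * a^10 * b^14 * (p 0) * (p 2)^5 * (v 0) * (v 2) + (4 : ℝ) * a^10 * b^14 * (p 0)^2 * (p 2)^4 * (v 2)^2 + (-4 : ℝ) * a^10 * b^14 * (p 0)^2 * (p 2)^4 * (v 0)^2 + (-4 : ℝ) * a^10 * b^14 * (p 0)^3 * (p 2)^3 * (v 0) * (v 2) + (-8 : ℝ) * a^10 * b^14 * c^2 * (p 0)^3 * (p 1)^2 * (p 2)^3 * (v 0) * (v 2) + (-8 : ℝ) * a^10 * b^14 * c^2 * (p 0)^3 * (p 1)^3 * (p 2)^2 * (v 0) * (v 1) + (8 : ℝ) * a^10 * b^14 * c^2 * (p 0)^4 * (p 1)^2 * (p 2)^2 * (v 2)^2 + (8 : ℝ) * a^10 * b^14 * c^2 * (p 0)^4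 * (p 1)^2 * (p 2)^2 * (v 1)^2 + (24 : ℝ) * a^10 * b^14 * c^2 * (p 0)^4 * (p 1)^2 * (p 2)^2 * (v 0)^2 + (8 : ℝ) * a^10 * b^16 * c^2 * (p 0)^3 * (p 1) * (p 2)^4 * (v 0) * (v 1) + (8 : ℝ) * a^10 * b^16 * c^2 * (p 0)^3 * (p 1)^2 * (p 2)^3 * (v 0) * (v 2) + (-16 : ℝ) * a^10 * b^16 * c^2 * (p 0)^4 * (p 1) * (p 2)^3 * (v 1) * (v 2) + (4 : ℝ) * a^10 * b^16 * c^2 * (p 0)^4 * (p 1)^2 * (p 2)^2 * (v 0)^2 + (8 : ℝ) * a^10 * b^16 * c^2 * (p 0)^5 * (p 1) * (p 2)^2 * (v 0) * (v 1) + (-8 : ℝ) * a^10 * b^18 * c^2 * (p 0)^3 * (p 2)^5 * (v 0) * (v 2) + (8 : ℝ) * a^10 * b^18 * c^2 * (p 0)^4 * (p 2)^4 * (v 2)^2 + (8 : ℝ) * a^10 * b^18 * c^2 * (p 0)^4 * (p 2)^4 * (v 0)^2 + (-8 : ℝ) * a^10 * b^18 * c^2 * (p 0)^5 * (p 2)^3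 * (v 0) * (v 2) + (-4 : ℝ) * a^12 * b^4 * (p 0) * (p 1)^5 * (v 0) * (v 1) + (4 : ℝ) * a^12 * b^6 * (p 0) * (p 1)^3 * (p 2)^2 * (v 0) * (v 1) + (8 : ℝ) * a^12 * b^6 * (p 0) * (p 1)^4 * (p 2) * (v 0) * (v 2) + (4 : ℝ) * a^12 * b^6 * (p 0)^2 * (p 1)^3 * (p 2) * (v 1) * (v 2) + (-8 : ℝ) * a^12 * b^8 * (p 0) * (p 1)^2 * (p 2)^3 * (v 0) * (v 2) + (4 : ℝ) * a^12 * b^8 * (p 0) * (p 1)^3 * (p 2)^2 * (v 0) * (v 1) + (4 : ℝ) * a^12 * b^8 * (p 0) * (p 1)^4 * (p 2) * (v 0) * (v 2) + (-4 : ℝ) * a^12 * b^8 * (p 0)^2 * (p 1)^2 * (p 2)^2 * (v 2)^2 + (4 : ℝ) * a^12 * b^8 * (p 0)^2 * (p 1)^2 * (p 2)^2 * (v 1)^2 + (4 : ℝ) * a^12 * b^8 * (p 0)^2 * (p 1)^3 * (p 2) * (v 1) * (v 2) + (-4 : ℝ) * a^12 * b^8 * c^2 * (p 0)^2 * (p 1)^6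 * (v 1)^2 + (16 : ℝ) * a^12 * b^8 * c^2 * (p 0)^3 * (p 1)^5 * (v 0) * (v 1) + (-4 : ℝ) * a^12 * b^8 * c^2 * (p 0)^4 * (p 1)^4 * (v 1)^2 + (-4 : ℝ) * a^12 * b^8 * c^2 * (p 0)^4 * (p 1)^4 * (v 0)^2 + (-4 : ℝ) * a^12 * b^10 * (p 0) * (p 1) * (p 2)^4 * (v 0) * (v 1) + (-4 : ℝ) * a^12 * b^10 * (p 0) * (p 1)^2 * (p 2)^3 * (v 0) * (v 2) + (8 : ℝ) * a^12 * b^10 * (p 0) * (p 1)^3 * (p 2)^2 * (v 0) * (v 1) + (-4 : ℝ) * a^12 * b^10 * (p 0)^2 * (p 1) * (p 2)^3 * (v 1) * (v 2) + (-4 : ℝ) * a^12 * b^10 * (p 0)^2 * (p 1)^2 * (p 2)^2 * (v 2)^2 + (4 : ℝ) * a^12 * b^10 * (p 0)^2 * (p 1)^2 * (p 2)^2 * (v 1)^2 + (4 : ℝ) * a^12 * b^10 * c^2 * (p 0)^2 * (p 1)^4 * (p 2)^2 * (v 1)^2 + (8 : ℝ) * a^12 * b^10 * c^2 * (p 0)^2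 * (p 1)^5 * (p 2) * (v 1) * (v 2) + (8 : ℝ) * a^12 * b^10 * c^2 * (p 0)^3 * (p 1)^3 * (p 2)^2 * (v 0) * (v 1) + (-16 : ℝ) * a^12 * b^10 * c^2 * (p 0)^3 * (p 1)^4 * (p 2) * (v 0) * (v 2) + (8 : ℝ) * a^12 * b^10 * c^2 * (p 0)^4 * (p 1)^3 * (p 2) * (v 1) * (v 2) + (-8 : ℝ) * a^12 * b^12 * (p 0) * (p 1) * (p 2)^4 * (v 0) * (v 1) + (-4 : ℝ) * a^12 * b^12 * (p 0) * (p 1)^2 * (p 2)^3 * (v 0) * (v 2) + (-4 : ℝ) * a^12 * b^12 * (p 0)^2 * (p 1) * (p 2)^3 * (v 1) * (v 2) + (-8 : ℝ) * a^12 * b^12 * c^2 * (p 0)^2 * (p 1)^3 * (p 2)^3 * (v 1) * (v 2) + (-4 : ℝ) * a^12 * b^12 * c^2 * (p 0)^2 * (p 1)^4 * (p 2)^2 * (v 2)^2 + (-4 : ℝ) * a^12 * b^12 * c^2 * (p 0)^2 * (p 1)^4 * (p 2)^2 * (v 1)^2 + (-8 : ℝ) * a^12 * b^12 * c^2 * (p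 0)^3 * (p 1)^2 * (p 2)^3 * (v 0) * (v 2) + (48 : ℝ) * a^12 * b^12 * c^2 * (p 0)^3 * (p 1)^3 * (p 2)^2 * (v 0) * (v 1) + (-4 : ℝ) * a^12 * b^12 * c^2 * (p 0)^4 * (p 1)^2 * (p 2)^2 * (v 2)^2 + (-4 : ℝ) * a^12 * b^12 * c^2 * (p 0)^4 * (p 1)^2 * (p 2)^2 * (v 0)^2 + (4 : ℝ) * a^12 * b^14 * (p 0) * (p 2)^5 * (v 0) * (v 2) + (4 : ℝ) * a^12 * b^14 * c^2 * (p 0)^2 * (p 1)^2 * (p 2)^4 * (v 2)^2 + (4 : ℝ) * a^12 * b^14 * c^2 * (p 0)^2 * (p 1)^2 * (p 2)^4 * (v 1)^2 + (8 : ℝ) * a^12 * b^14 * c^2 * (p 0)^2 * (p 1)^3 * (p 2)^3 * (v 1) * (v 2) + (-48 : ℝ) * a^12 * b^14 * c^2 * (p 0)^3 * (p 1)^2 * (p 2)^3 * (v 0) * (v 2) + (8 : ℝ) * a^12 * b^14 * c^2 * (p 0)^3 * (p 1)^3 * (p 2)^2 * (v 0) * (v 1) + (4 : ℝ) * a^12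 * b^14 * c^2 * (p 0)^4 * (p 1)^2 * (p 2)^2 * (v 1)^2 + (4 : ℝ) * a^12 * b^14 * c^2 * (p 0)^4 * (p 1)^2 * (p 2)^2 * (v 0)^2 + (-8 : ℝ) * a^12 * b^16 * c^2 * (p 0)^2 * (p 1) * (p 2)^5 * (v 1) * (v 2) + (-4 : ℝ) * a^12 * b^16 * c^2 * (p 0)^2 * (p 1)^2 * (p 2)^4 * (v 2)^2 + (16 : ℝ) * a^12 * b^16 * c^2 * (p 0)^3 * (p 1) * (p 2)^4 * (v 0) * (v 1) + (-8 : ℝ) * a^12 * b^16 * c^2 * (p 0)^3 * (p 1)^2 * (p 2)^3 * (v 0) * (v 2) + (-8 : ℝ) * a^12 * b^16 * c^2 * (p 0)^4 * (p 1) * (p 2)^3 * (v 1) * (v 2) + (4 : ℝ) * a^12 * b^18 * c^2 * (p 0)^2 * (p 2)^6 * (v 2)^2 + (-16 : ℝ) * a^12 * b^18 * c^2 * (p 0)^3 * (p 2)^5 * (v 0) * (v 2) + (4 : ℝ) * a^12 * b^18 * c^2 * (p 0)^4 * (p 2)^4 * (v 2)^2 + (4 : ℝ) * a^12 * b^18 *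 c^2 * (p 0)^4 * (p 2)^4 * (v 0)^2 + (4 : ℝ) * a^14 * b^4 * (p 1)^5 * (p 2) * (v 1) * (v 2) + (-4 : ℝ) * a^14 * b^6 * (p 1)^3 * (p 2)^3 * (v 1) * (v 2) + (-4 : ℝ) * a^14 * b^6 * (p 1)^4 * (p 2)^2 * (v 2)^2 + (4 : ℝ) * a^14 * b^6 * (p 1)^4 * (p 2)^2 * (v 1)^2 + (4 : ℝ) * a^14 * b^6 * (p 1)^5 * (p 2) * (v 1) * (v 2) + (8 : ℝ) * a^14 * b^6 * c^2 * (p 0)^2 * (p 1)^6 * (v 1)^2 + (-8 : ℝ) * a^14 * b^6 * c^2 * (p 0)^3 * (p 1)^5 * (v 0) * (v 1) + (4 : ℝ) * a^14 * b^8 * (p 1)^2 * (p 2)^4 * (v 2)^2 + (-4 : ℝ) * a^14 * b^8 * (p 1)^2 * (p 2)^4 * (v 1)^2 + (-8 : ℝ) * a^14 * b^8 * (p 1)^3 * (p 2)^3 * (v 1) * (v 2) + (-4 : ℝ) * a^14 * b^8 * (p 1)^4 * (p 2)^2 * (v 2)^2 + (4 : ℝ) * a^14 * b^8 * (p 1)^4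 * (p 2)^2 * (v 1)^2 + (4 : ℝ) * a^14 * b^8 * c^2 * (p 0)^2 * (p 1)^4 * (p 2)^2 * (v 1)^2 + (4 : ℝ) * a^14 * b^8 * c^2 * (p 0)^2 * (p 1)^4 * (p 2)^2 * (v 0)^2 + (-16 : ℝ) * a^14 * b^8 * c^2 * (p 0)^2 * (p 1)^5 * (p 2) * (v 1) * (v 2) + (8 : ℝ) * a^14 * b^8 * c^2 * (p 0)^3 * (p 1)^4 * (p 2) * (v 0) * (v 2) + (4 : ℝ) * a^14 * b^10 * (p 1) * (p 2)^5 * (v 1) * (v 2) + (4 : ℝ) * a^14 * b^10 * (p 1)^2 * (p 2)^4 * (v 2)^2 + (-4 : ℝ) * a^14 * b^10 * (p 1)^2 * (p 2)^4 * (v 1)^2 + (-4 : ℝ) * a^14 * b^10 * (p 1)^3 * (p 2)^3 * (v 1) * (v 2) + (-8 : ℝ) * a^14 * b^10 * c^2 * (p 0)^2 * (p 1)^3 * (p 2)^3 * (v 1) * (v 2) + (8 : ℝ) * a^14 * b^10 * c^2 * (p 0)^2 * (p 1)^4 * (p 2)^2 * (v 2)^2 + (24 : ℝ) * a^14 * b^10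 * c^2 * (p 0)^2 * (p 1)^4 * (p 2)^2 * (v 1)^2 + (8 : ℝ) * a^14 * b^10 * c^2 * (p 0)^2 * (p 1)^4 * (p 2)^2 * (v 0)^2 + (-8 : ℝ) * a^14 * b^10 * c^2 * (p 0)^3 * (p 1)^3 * (p 2)^2 * (v 0) * (v 1) + (4 : ℝ) * a^14 * b^12 * (p 1) * (p 2)^5 * (v 1) * (v 2) + (4 : ℝ) * a^14 * b^12 * c^2 * (p 0)^2 * (p 1)^2 * (p 2)^4 * (v 2)^2 + (4 : ℝ) * a^14 * b^12 * c^2 * (p 0)^2 * (p 1)^2 * (p 2)^4 * (v 0)^2 + (-48 : ℝ) * a^14 * b^12 * c^2 * (p 0)^2 * (p 1)^3 * (p 2)^3 * (v 1) * (v 2) + (4 : ℝ) * a^14 * b^12 * c^2 * (p 0)^2 * (p 1)^4 * (p 2)^2 * (v 1)^2 + (4 : ℝ) * a^14 * b^12 * c^2 * (p 0)^2 * (p 1)^4 * (p 2)^2 * (v 0)^2 + (8 : ℝ) * a^14 * b^12 * c^2 * (p 0)^3 * (p 1)^2 * (p 2)^3 * (v 0) * (v 2) + (8 : ℝ) * a^14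 * b^12 * c^2 * (p 0)^3 * (p 1)^3 * (p 2)^2 * (v 0) * (v 1) + (24 : ℝ) * a^14 * b^14 * c^2 * (p 0)^2 * (p 1)^2 * (p 2)^4 * (v 2)^2 + (8 : ℝ) * a^14 * b^14 * c^2 * (p 0)^2 * (p 1)^2 * (p 2)^4 * (v 1)^2 + (8 : ℝ) * a^14 * b^14 * c^2 * (p 0)^2 * (p 1)^2 * (p 2)^4 * (v 0)^2 + (-8 : ℝ) * a^14 * b^14 * c^2 * (p 0)^2 * (p 1)^3 * (p 2)^3 * (v 1) * (v 2) + (-8 : ℝ) * a^14 * b^14 * c^2 * (p 0)^3 * (p 1)^2 * (p 2)^3 * (v 0) * (v 2) + (-16 : ℝ) * a^14 * b^16 * c^2 * (p 0)^2 * (p 1) * (p 2)^5 * (v 1) * (v 2) + (4 : ℝ) * a^14 * b^16 * c^2 * (p 0)^2 * (p 1)^2 * (p 2)^4 * (v 2)^2 + (4 : ℝ) * a^14 * b^16 * c^2 * (p 0)^2 * (p 1)^2 * (p 2)^4 * (v 0)^2 + (8 : ℝ) * a^14 * b^16 * c^2 * (p 0)^3 * (p 1) * (p 2)^4 * (v 0)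 * (v 1) + (8 : ℝ) * a^14 * b^18 * c^2 * (p 0)^2 * (p 2)^6 * (v 2)^2 + (-8 : ℝ) * a^14 * b^18 * c^2 * (p 0)^3 * (p 2)^5 * (v 0) * (v 2) + (-4 : ℝ) * a^16 * b^4 * c^2 * (p 0)^2 * (p 1)^6 * (v 1)^2 + (8 : ℝ) * a^16 * b^6 * c^2 * (p 0) * (p 1)^5 * (p 2)^2 * (v 0) * (v 1) + (8 : ℝ) * a^16 * b^6 * c^2 * (p 0)^2 * (p 1)^5 * (p 2) * (v 1) * (v 2) + (-8 : ℝ) * a^16 * b^8 * c^2 * (p 0) * (p 1)^4 * (p 2)^3 * (v 0) * (v 2) + (16 : ℝ) * a^16 * b^8 * c^2 * (p 0) * (p 1)^5 * (p 2)^2 * (v 0) * (v 1) + (-4 : ℝ) * a^16 * b^8 * c^2 * (p 0)^2 * (p 1)^4 * (p 2)^2 * (v 2)^2 + (-4 : ℝ) * a^16 * b^8 * c^2 * (p 0)^2 * (p 1)^4 * (p 2)^2 * (v 1)^2 + (8 : ℝ) * a^16 * b^10 * c^2 * (p 0) * (p 1)^3 * (p 2)^4 * (v 0) * (v 1) + (-16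 : ℝ) * a^16 * b^10 * c^2 * (p 0) * (p 1)^4 * (p 2)^3 * (v 0) * (v 2) + (8 : ℝ) * a^16 * b^10 * c^2 * (p 0) * (p 1)^5 * (p 2)^2 * (v 0) * (v 1) + (8 : ℝ) * a^16 * b^10 * c^2 * (p 0)^2 * (p 1)^3 * (p 2)^3 * (v 1) * (v 2) + (4 : ℝ) * a^16 * b^10 * c^2 * (p 0)^2 * (p 1)^4 * (p 2)^2 * (v 1)^2 + (-8 : ℝ) * a^16 * b^12 * c^2 * (p 0) * (p 1)^2 * (p 2)^5 * (v 0) * (v 2) + (16 : ℝ) * a^16 * b^12 * c^2 * (p 0) * (p 1)^3 * (p 2)^4 * (v 0) * (v 1) + (-8 : ℝ) * a^16 * b^12 * c^2 * (p 0) * (p 1)^4 * (p 2)^3 * (v 0) * (v 2) + (-4 : ℝ) * a^16 * b^12 * c^2 * (p 0)^2 * (p 1)^2 * (p 2)^4 * (v 2)^2 + (-8 : ℝ) * a^16 * b^12 * c^2 * (p 0)^2 * (p 1)^3 * (p 2)^3 * (v 1) * (v 2) + (-16 : ℝ) * a^16 * b^14 * c^2 * (p 0) * (p 1)^2 * (p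 2)^5 * (v 0) * (v 2) + (8 : ℝ) * a^16 * b^14 * c^2 * (p 0) * (p 1)^3 * (p 2)^4 * (v 0) * (v 1) + (4 : ℝ) * a^16 * b^14 * c^2 * (p 0)^2 * (p 1)^2 * (p 2)^4 * (v 2)^2 + (4 : ℝ) * a^16 * b^14 * c^2 * (p 0)^2 * (p 1)^2 * (p 2)^4 * (v 1)^2 + (-8 : ℝ) * a^16 * b^16 * c^2 * (p 0) * (p 1)^2 * (p 2)^5 * (v 0) * (v 2) + (-8 : ℝ) * a^16 * b^16 * c^2 * (p 0)^2 * (p 1) * (p 2)^5 * (v 1) * (v 2) + (4 : ℝ) * a^16 * b^18 * c^2 * (p 0)^2 * (p 2)^6 * (v 2)^2 + (4 : ℝ) * a^18 * b^4 * c^2 * (p 1)^6 * (p 2)^2 * (v 1)^2 + (-8 : ℝ) * a^18 * b^6 * c^2 * (p 1)^5 * (p 2)^3 * (v 1) * (v 2) + (8 : ℝ) * a^18 * b^6 * c^2 * (p 1)^6 * (p 2)^2 * (v 1)^2 + (4 : ℝ) * a^18 * b^8 * c^2 * (p 1)^4 * (p 2)^4 * (v 2)^2 + (4 : ℝ) *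 a^18 * b^8 * c^2 * (p 1)^4 * (p 2)^4 * (v 1)^2 + (-16 : ℝ) * a^18 * b^8 * c^2 * (p 1)^5 * (p 2)^3 * (v 1) * (v 2) + (4 : ℝ) * a^18 * b^8 * c^2 * (p 1)^6 * (p 2)^2 * (v 1)^2 + (-8 : ℝ) * a^18 * b^10 * c^2 * (p 1)^3 * (p 2)^5 * (v 1) * (v 2) + (8 : ℝ) * a^18 * b^10 * c^2 * (p 1)^4 * (p 2)^4 * (v 2)^2 + (8 : ℝ) * a^18 * b^10 * c^2 * (p 1)^4 * (p 2)^4 * (v 1)^2 + (-8 : ℝ) * a^18 * b^10 * c^2 * (p 1)^5 * (p 2)^3 * (v 1) * (v 2) + (4 : ℝ) * a^18 * b^12 * c^2 * (p 1)^2 * (p 2)^6 * (v 2)^2 + (-16 : ℝ) * a^18 * b^12 * c^2 * (p 1)^3 * (p 2)^5 * (v 1) * (v 2) + (4 : ℝ) * a^18 * b^12 * c^2 * (p 1)^4 * (p 2)^4 * (v 2)^2 + (4 : ℝ) * a^18 * b^12 * c^2 * (p 1)^4 * (p 2)^4 * (v 1)^2 + (8 : ℝ) * a^18 * b^14 * c^2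 * (p 1)^2 * (p 2)^6 * (v 2)^2 + (-8 : ℝ) * a^18 * b^14 * c^2 * (p 1)^3 * (p 2)^5 * (v 1) * (v 2) + (4 : ℝ) * a^18 * b^16 * c^2 * (p 1)^2 * (p 2)^6 * (v 2)^2) * hRu + ((4 : ℝ) * a^4 * b^10 * (p 0)^3 * (p 1) * (v 0) * (v 1) + (-4 : ℝ) * a^4 * b^12 * (p 0)^3 * (p 2) * (v 0) * (v 2) + (4 : ℝ) * a^6 * b^8 * (p 0)^2 * (p 1)^2 * (v 1)^2 + (-4 : ℝ) * a^6 * b^8 * (p 0)^2 * (p 1)^2 * (v 0)^2 + (-4 : ℝ) * a^6 * b^8 * (p 0)^3 * (p 1) * (v 0) * (v 1) + (-8 : ℝ) * a^6 * b^10 * (p 0)^2 * (p 1) * (p 2) * (v 1) * (v 2) + (4 : ℝ) * a^6 * b^12 * (p 0)^2 * (p 2)^2 * (v 2)^2 + (-4 : ℝ) * a^6 * b^12 * (p 0)^2 * (p 2)^2 * (v 0)^2 + (-4 : ℝ) * a^6 * b^12 * (p 0)^3 * (p 2) * (v 0) * (v 2) + (-4 : ℝ) * a^8 * b^6 * (p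 0) * (p 1)^3 * (v 0) * (v 1) + (-4 : ℝ) * a^8 * b^6 * (p 0)^2 * (p 1)^2 * (v 1)^2 + (4 : ℝ) * a^8 * b^6 * (p 0)^2 * (p 1)^2 * (v 0)^2 + (4 : ℝ) * a^8 * b^8 * (p 0) * (p 1)^2 * (p 2) * (v 0) * (v 2) + (4 : ℝ) * a^8 * b^8 * (p 0)^2 * (p 1) * (p 2) * (v 1) * (v 2) + (-4 : ℝ) * a^8 * b^10 * (p 0) * (p 1) * (p 2)^2 * (v 0) * (v 1) + (-4 : ℝ) * a^8 * b^10 * (p 0)^2 * (p 1) * (p 2) * (v 1) * (v 2) + (4 : ℝ) * a^8 * b^12 * (p 0) * (p 2)^3 * (v 0) * (v 2) + (4 : ℝ) * a^8 * b^12 * (p 0)^2 * (p 2)^2 * (v 2)^2 + (-4 : ℝ) * a^8 * b^12 * (p 0)^2 * (p 2)^2 * (v 0)^2 + (4 : ℝ) * a^10 * b^4 * (p 0) * (p 1)^3 * (v 0) * (v 1) + (-8 : ℝ) * a^10 * b^6 * (p 0) * (p 1)^2 * (p 2) * (v 0) * (v 2) + (-4 : ℝ) * a^10 * b^8 * (p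 0) * (p 1) * (p 2)^2 * (v 0) * (v 1) + (-4 : ℝ) * a^10 * b^8 * (p 0) * (p 1)^2 * (p 2) * (v 0) * (v 2) + (-8 : ℝ) * a^10 * b^10 * (p 0) * (p 1) * (p 2)^2 * (v 0) * (v 1) + (4 : ℝ) * a^10 * b^12 * (p 0) * (p 2)^3 * (v 0) * (v 2) + (-4 : ℝ) * a^12 * b^4 * (p 1)^3 * (p 2) * (v 1) * (v 2) + (4 : ℝ) * a^12 * b^6 * (p 1)^2 * (p 2)^2 * (v 2)^2 + (-4 : ℝ) * a^12 * b^6 * (p 1)^2 * (p 2)^2 * (v 1)^2 + (-4 : ℝ) * a^12 * b^6 * (p 1)^3 * (p 2) * (v 1) * (v 2) + (4 : ℝ) * a^12 * b^8 * (p 1) * (p 2)^3 * (v 1) * (v 2) + (4 : ℝ) * a^12 * b^8 * (p 1)^2 * (p 2)^2 * (v 2)^2 + (-4 : ℝ) * a^12 * b^8 * (p 1)^2 * (p 2)^2 * (v 1)^2 + (4 : ℝ) * a^12 * b^10 * (p 1) * (p 2)^3 * (v 1) * (v 2)) * hcone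
  · -- I2 is constant along lines
    intro x w t
    simp only [I2, m12, m13, m23, PiLp.add_apply, PiLp.smul_apply, smul_eq_mul]
    ring
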